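/- Let μ be a nonzero σ-finite measure on ℝ^d of the form dμ = p dx for a nonnegative measurable density p, and let h : ℝ^d → ℝ be measurable and bounded below, with m = essinf_μ h (the essential infimum of h with respect to μ) finite. Assume there exists β₀ > 0 such that ∫ exp(−β₀ h) dμ < ∞, and that ∫ exp(−β h) dμ > 0 for all β ≥ β₀. For β ≥ β₀ let Q_β be the probability measure with dQ_β = exp(−β h) dμ / ∫ exp(−β h) dμ. Then for every δ > 0, Q_β({x : h(x) ≥ m + δ}) → 0 as β → ∞; i.e., the Boltzmann distributions Q_β concentrate around the essential minimizers of h in the zero-temperature limit. -/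

import Mathlib

open MeasureTheory Filter

/-- **Concentration of Boltzmann distributions in the zero-temperature limit.**
If `μ = p dx` is a nonzero σ-finite measure, `h` is measurable and bounded below with
essential infimum `m` w.r.t. `μ` (i.e. `m` is the largest real with `μ {h < m} = 0`),
and `∫ exp(-β₀ h) dμ < ∞` for some `β₀ > 0` with all partition functions positive for
`β ≥ β₀`, then for every `δ > 0` the Boltzmann measure `Q_β` (with density
`exp(-β h)/Z_β` w.r.t. `μ`) of the set `{h ≥ m + δ}` tends to `0` as `β → ∞`. -/
theorem boltzmann_concentration
    (d : ℕ) (hd : 1 ≤ d)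
    (p : EuclideanSpace ℝ (Fin d) → ℝ)
    (hp_meas : Measurable p) (hp_nonneg : ∀ x, 0 ≤ p x)
    (μ : Measure (EuclideanSpace ℝ (Fin d)))
    (hμ : μ = volume.withDensity fun x => ENNReal.ofReal (p x))
    (hμ_ne : μ ≠ 0) (hμ_sf : SigmaFinite μ)
    (h : EuclideanSpace ℝ (Fin d) → ℝ)
    (hh_meas : Measurable h) (hh_bdd : BddBelow (Set.range h))
    -- `m` is the essential infimum of `h` w.r.t. `μ`: the largest real number
    -- such that `μ {x | h x < m} = 0`
    (m : ℝ)
    (hm_null : μ {x | h x < m} = 0)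
    (hm_max : ∀ m' : ℝ, m < m' → μ {x | h x < m'} ≠ 0)
    (β₀ : ℝ) (hβ₀ : 0 < β₀)
    (h_int : Integrable (fun x => Real.exp (-β₀ * h x)) μ)
    (h_pos : ∀ β : ℝ, β₀ ≤ β → 0 < ∫ x, Real.exp (-β * h x) ∂μ) :
    ∀ δ : ℝ, 0 < δ →
      Tendsto
        (fun β : ℝ =>
          (∫ x in {x | m + δ ≤ h x}, Real.exp (-β * h x) ∂μ) /
            (∫ x, Real.exp (-β * h x) ∂μ))
        atTop (nhds 0) := by
  intro δ hδ
  obtain ⟨m₀, hm₀⟩ := hh_bdd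
  have hm₀' : ∀ x, m₀ ≤ h x := fun x => hm₀ ⟨x, rfl⟩
  have hmeasβ : ∀ β : ℝ, Measurable fun x => Real.exp (-β * h x) :=
    fun β => (hh_meas.const_mul (-β)).exp
  have h_intβ : ∀ β, β₀ ≤ β → Integrable (fun x => Real.exp (-β * h x)) μ := by
    intro β hβ
    refine (h_int.const_mul (Real.exp (-(β - β₀) * m₀))).mono'
      (hmeasβ β).aestronglyMeasurable (ae_of_all _ fun x => ?_)
    rw [Real.norm_eq_abs, abs_of_nonneg (Real.exp_pos _).le, ← Real.exp_add]
    exact Real.exp_le_exp.2 (by nlinarith [hm₀' x])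
  set b := m + δ / 2 with hb
  set a := m + δ with ha
  set A : Set (EuclideanSpace ℝ (Fin d)) := {x | m ≤ h x} ∩ {x | h x < b} with hA
  have hA_meas : MeasurableSet A :=
    (measurableSet_le measurable_const hh_meas).inter (measurableSet_lt hh_meas measurable_const)
  have hA_ne : μ A ≠ 0 := by
    intro h0
    apply hm_max b (by rw [hb]; linarith)
    have hsub : {x | h x < b} ⊆ {x | h x < m} ∪ A := by
      intro x hx
      by_cases hxm : h x < m
      · exact Or.inl hxm
      · exact Or.inr ⟨not_lt.1 hxm, hx⟩
    refine le_antisymm ?_ (zero_le)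
    calc μ {x | h x < b} ≤ μ ({x | h x < m} ∪ A) := measure_mono hsub
      _ ≤ μ {x | h x < m} + μ A := measure_union_le _ _
      _ = 0 := by rw [hm_null, h0, add_zero]
  have hA_fin : μ A < ⊤ := by
    have hsub : A ⊆ {x | Real.exp (-β₀ * b) ≤ Real.exp (-β₀ * h x)} := fun x hx =>
      Set.mem_setOf.2 (Real.exp_le_exp.2 (by nlinarith [mul_pos hβ₀ (sub_pos.2 (hx.2 : h x < b))]))
    exact lt_of_le_of_lt (measure_mono hsub) (h_int.measure_ge_lt_top (Real.exp_pos _))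
  set cA := (μ A).toReal with hcA
  have hcA_pos : 0 < cA := ENNReal.toReal_pos hA_ne hA_fin.ne
  set Z₀ := ∫ x, Real.exp (-β₀ * h x) ∂μ with hZ₀
  have hZ₀_pos : 0 < Z₀ := h_pos β₀ le_rfl
  have hden : ∀ β, β₀ ≤ β → Real.exp (-β * b) * cA ≤ ∫ x, Real.exp (-β * h x) ∂μ := by
    intro β hβ
    have hβpos : 0 < β := lt_of_lt_of_le hβ₀ hβ
    have h1 : ∫ x in A, Real.exp (-β * b) ∂μ ≤ ∫ x in A, Real.exp (-β * h x) ∂μ := by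
      refine setIntegral_mono_on (integrableOn_const hA_fin.ne)
        ((h_intβ β hβ).integrableOn) hA_meas fun x hx => ?_
      exact Real.exp_le_exp.2 (by nlinarith [mul_pos hβpos (sub_pos.2 (hx.2 : h x < b))])
    have h2 : ∫ x in A, Real.exp (-β * h x) ∂μ ≤ ∫ x, Real.exp (-β * h x) ∂μ :=
      setIntegral_le_integral (h_intβ β hβ) (ae_of_all _ fun x => (Real.exp_pos _).le)
    have h3 : ∫ x in A, Real.exp (-β * b) ∂μ = Real.exp (-β * b) * cA := by
      rw [setIntegral_const, smul_eq_mul, mul_comm]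
      rfl
    linarith
  have hnum : ∀ β, β₀ ≤ β →
      ∫ x in {x | a ≤ h x}, Real.exp (-β * h x) ∂μ ≤ Real.exp (-(β - β₀) * a) * Z₀ := by
    intro β hβ
    have hS : MeasurableSet {x | a ≤ h x} := measurableSet_le measurable_const hh_meas
    have h1 : ∫ x in {x | a ≤ h x}, Real.exp (-β * h x) ∂μ
        ≤ ∫ x in {x | a ≤ h x}, Real.exp (-(β - β₀) * a) * Real.exp (-β₀ * h x) ∂μ := by
      refine setIntegral_mono_on ((h_intβ β hβ).integrableOn)
        ((h_int.const_mul _).integrableOn) hS fun x hx => ?_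
      rw [← Real.exp_add]
      exact Real.exp_le_exp.2 (by nlinarith [Set.mem_setOf.1 hx])
    have h2 : ∫ x in {x | a ≤ h x}, Real.exp (-(β - β₀) * a) * Real.exp (-β₀ * h x) ∂μ
        = Real.exp (-(β - β₀) * a) * ∫ x in {x | a ≤ h x}, Real.exp (-β₀ * h x) ∂μ :=
      integral_const_mul _ _
    have h3 : ∫ x in {x | a ≤ h x}, Real.exp (-β₀ * h x) ∂μ ≤ Z₀ :=
      setIntegral_le_integral h_int (ae_of_all _ fun x => (Real.exp_pos _).le)
    calc ∫ x in {x | a ≤ h x}, Real.exp (-β * h x) ∂μ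
        ≤ Real.exp (-(β - β₀) * a) * ∫ x in {x | a ≤ h x}, Real.exp (-β₀ * h x) ∂μ := by
          rw [← h2]; exact h1
      _ ≤ Real.exp (-(β - β₀) * a) * Z₀ :=
          mul_le_mul_of_nonneg_left h3 (Real.exp_pos _).le
  have hC : Tendsto (fun β : ℝ => Real.exp (β₀ * a) * Z₀ / cA * Real.exp (-(δ / 2) * β))
      atTop (nhds 0) := by
    rw [show (0 : ℝ) = Real.exp (β₀ * a) * Z₀ / cA * 0 by ring]
    apply Tendsto.const_mul
    have h1 : Tendsto (fun β : ℝ => -(δ / 2) * β) atTop atBot :=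
      (tendsto_const_mul_atBot_of_neg (by linarith)).2 tendsto_id
    exact Real.tendsto_exp_atBot.comp h1
  apply tendsto_of_tendsto_of_tendsto_of_le_of_le' tendsto_const_nhds hC
  · filter_upwards [eventually_ge_atTop β₀] with β hβ
    exact div_nonneg (setIntegral_nonneg (measurableSet_le measurable_const hh_meas)
      fun x _ => (Real.exp_pos _).le) (h_pos β hβ).le
  · filter_upwards [eventually_ge_atTop β₀] with β hβ
    have hnn : 0 ≤ Real.exp (-(β - β₀) * a) * Z₀ := by positivity
    have hdpos : 0 < Real.exp (-β * b) * cA := by positivity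
    calc (∫ x in {x | a ≤ h x}, Real.exp (-β * h x) ∂μ) / ∫ x, Real.exp (-β * h x) ∂μ
        ≤ (Real.exp (-(β - β₀) * a) * Z₀) / (Real.exp (-β * b) * cA) :=
          div_le_div₀ hnn (hnum β hβ) hdpos (hden β hβ)
      _ = Real.exp (β₀ * a) * Z₀ / cA * Real.exp (-(δ / 2) * β) := by
          have hexp : Real.exp (-(β - β₀) * a)
              = Real.exp (β₀ * a) * Real.exp (-(δ / 2) * β) * Real.exp (-β * b) := by
            rw [← Real.exp_add, ← Real.exp_add]
            congr 1
            rw [hb, ha]; ring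
          rw [hexp]
          field_simp
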